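/- arXiv:1512.09290 — 3 statements merged into one kernel-verified Lean document; each statement's English description precedes it below -/
import Mathlib

section
/- Let (Ω, F, μ) be a probability space, X an integrable real random variable on it, and ε ∈ (0,1). Suppose t ∈ ℝ is such that μ{X > t} = ε. Then for every measurable set S ⊆ Ω with μ(S) ≤ ε, the conditional expectation of X given {X ≤ t} is at most the conditional expectation of X given the complement of S: E[X | X ≤ t] ≤ E[X | Ω \ S]. -/
open MeasureTheory

/-- Removing any set of measure at most `ε` is no better (for lowering the
conditional expectation) than removing the upper tail `{X > t}` of the same measure `ε`:
`E[X | X ≤ t] ≤ E[X | Ω \ S]`.  Conditional expectations given an event are expressed as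
set averages `⨍ ω in A, X ω ∂μ = (μ A)⁻¹ ∫_A X dμ`. -/
theorem conditioned_tail_average_le {Ω : Type*} [MeasurableSpace Ω]
    (μ : Measure Ω) [IsProbabilityMeasure μ]
    (X : Ω → ℝ) (hX : Integrable X μ)
    (ε : ℝ) (hε : ε ∈ Set.Ioo (0 : ℝ) 1)
    (t : ℝ) (ht : μ {ω | t < X ω} = ENNReal.ofReal ε)
    (S : Set Ω) (hS : MeasurableSet S) (hSε : μ S ≤ ENNReal.ofReal ε) :
    ⨍ ω in {ω | X ω ≤ t}, X ω ∂μ ≤ ⨍ ω in Sᶜ, X ω ∂μ := by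
  obtain ⟨hε0, hε1⟩ := hε
  -- replace X by a measurable representative Y
  set Y := hX.1.mk X with hYdef
  have hAE : X =ᵐ[μ] Y := hX.1.ae_eq_mk
  have hYm : Measurable Y := hX.1.stronglyMeasurable_mk.measurable
  have hY : Integrable Y μ := hX.congr hAE
  set A : Set Ω := {ω | Y ω ≤ t} with hAdef
  have hAm : MeasurableSet A := measurableSet_le hYm measurable_const
  set B : Set Ω := Sᶜ with hBdef
  have hBm : MeasurableSet B := hS.compl
  have hsetA : {ω | X ω ≤ t} =ᵐ[μ] A := by
    filter_upwards [hAE] with ω h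
    show (X ω ≤ t) = (Y ω ≤ t)
    rw [h]
  have hsetAc : {ω | t < X ω} =ᵐ[μ] Aᶜ := by
    filter_upwards [hAE] with ω h
    show (t < X ω) = ¬(Y ω ≤ t)
    rw [h, eq_iff_iff, not_le]
  have hμAc : μ Aᶜ = ENNReal.ofReal ε := (measure_congr hsetAc).symm.trans ht
  -- measure positivity
  have hε1' : ENNReal.ofReal ε < 1 := by
    rw [← ENNReal.ofReal_one]
    exact ENNReal.ofReal_lt_ofReal_iff one_pos |>.2 hε1
  have hμA : 0 < μ A := by
    have h := prob_compl_eq_one_sub (μ := μ) hAm.compl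
    rw [compl_compl, hμAc] at h
    rw [h]
    exact tsub_pos_iff_lt.2 hε1'
  have hμB : 0 < μ B := by
    have h := prob_compl_eq_one_sub (μ := μ) hS
    rw [← hBdef] at h
    rw [h]
    exact tsub_pos_iff_lt.2 (lt_of_le_of_lt hSε hε1')
  -- key measure inequality : μ (A \ B) ≤ μ (B \ A)
  have hABeq : A \ B = S ∩ A := by rw [hBdef, Set.diff_compl, Set.inter_comm]
  have hBAeq : B \ A = Aᶜ \ S := by
    rw [hBdef]; ext ω; simp [Set.mem_diff, and_comm]
  have hkey : μ (A \ B) ≤ μ (B \ A) := by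
    rw [hABeq, hBAeq]
    have e1 : μ (S ∩ A) + μ (S \ A) = μ S := measure_inter_add_diff S hAm
    have e2 : μ (Aᶜ ∩ S) + μ (Aᶜ \ S) = μ Aᶜ := measure_inter_add_diff Aᶜ hS
    have e3 : Aᶜ ∩ S = S \ A := by rw [Set.diff_eq, Set.inter_comm]
    have h4 : μ (S ∩ A) + μ (S \ A) ≤ μ (Aᶜ \ S) + μ (S \ A) := by
      rw [e1]
      calc μ S ≤ ENNReal.ofReal ε := hSε
        _ = μ Aᶜ := hμAc.symm
        _ = μ (S \ A) + μ (Aᶜ \ S) := by rw [← e2, e3]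
        _ = μ (Aᶜ \ S) + μ (S \ A) := add_comm _ _
    exact (ENNReal.add_le_add_iff_right (measure_ne_top μ _)).1 h4
  -- real quantities
  set a : ℝ := (μ (A ∩ B)).toReal with ha
  set c : ℝ := (μ (A \ B)).toReal with hc
  set b : ℝ := (μ (B \ A)).toReal with hb
  have hcb : c ≤ b := ENNReal.toReal_mono (measure_ne_top μ _) hkey
  have ha0 : 0 ≤ a := ENNReal.toReal_nonneg
  have hc0 : 0 ≤ c := ENNReal.toReal_nonneg
  have hb0 : 0 ≤ b := ENNReal.toReal_nonneg
  have hαsum : (μ A).toReal = a + c := by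
    rw [ha, hc, ← ENNReal.toReal_add (measure_ne_top μ _) (measure_ne_top μ _),
      measure_inter_add_diff A hBm]
  have hβsum : (μ B).toReal = a + b := by
    rw [ha, hb, Set.inter_comm,
      ← ENNReal.toReal_add (measure_ne_top μ _) (measure_ne_top μ _),
      measure_inter_add_diff B hAm]
  have hα0 : 0 < (μ A).toReal := ENNReal.toReal_pos hμA.ne' (measure_ne_top μ _)
  have hβ0 : 0 < (μ B).toReal := ENNReal.toReal_pos hμB.ne' (measure_ne_top μ _)
  -- integrals
  set I : ℝ := ∫ ω in A ∩ B, Y ω ∂μ with hI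
  set J : ℝ := ∫ ω in A \ B, Y ω ∂μ with hJ
  set K : ℝ := ∫ ω in B \ A, Y ω ∂μ with hK
  have hconst : ∀ s : Set Ω, Integrable (fun _ : Ω => t) (μ.restrict s) :=
    fun s => (integrable_const t).restrict (s := s)
  have hIle : I ≤ t * a := by
    have h := setIntegral_mono_on hY.integrableOn (hconst _) (hAm.inter hBm)
      (fun x hx => (hx.1 : Y x ≤ t))
    rwa [setIntegral_const, smul_eq_mul, mul_comm] at h
  have hJle : J ≤ t * c := by
    have h := setIntegral_mono_on hY.integrableOn (hconst _) (hAm.diff hBm)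
      (fun x hx => (hx.1 : Y x ≤ t))
    rwa [setIntegral_const, smul_eq_mul, mul_comm] at h
  have hKge : t * b ≤ K := by
    have h := setIntegral_mono_on (hconst _) hY.integrableOn (hBm.diff hAm)
      (fun x hx => le_of_lt (not_le.1 hx.2))
    rwa [setIntegral_const, smul_eq_mul, mul_comm] at h
  have hsum1 : ∫ ω in A, Y ω ∂μ = I + J := (integral_inter_add_diff hBm hY.integrableOn).symm
  have hsum2 : ∫ ω in B, Y ω ∂μ = I + K := by
    have h := integral_inter_add_diff hAm hY.integrableOn (s := B) (μ := μ) (f := fun ω => Y ω)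
    rw [Set.inter_comm] at h
    exact h.symm
  -- rewrite the goal
  have hres : μ.restrict {ω | X ω ≤ t} = μ.restrict A := Measure.restrict_congr_set hsetA
  have hgl : ⨍ ω in {ω | X ω ≤ t}, X ω ∂μ = (μ A).toReal⁻¹ * ∫ ω in A, Y ω ∂μ := by
    rw [setAverage_eq, measureReal_def, measure_congr hsetA, smul_eq_mul]
    congr 1
    rw [hres]
    exact integral_congr_ae (ae_restrict_of_ae hAE)
  have hgr : ⨍ ω in Sᶜ, X ω ∂μ = (μ B).toReal⁻¹ * ∫ ω in B, Y ω ∂μ := by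
    rw [setAverage_eq, smul_eq_mul, hBdef]
    congr 1
    exact integral_congr_ae (ae_restrict_of_ae hAE)
  rw [hgl, hgr, hsum1, hsum2, inv_mul_eq_div, inv_mul_eq_div, div_le_div_iff₀ hα0 hβ0,
    hαsum, hβsum]
  nlinarith [mul_le_mul_of_nonpos_right hIle (sub_nonpos.2 hcb)]
end

section
/- Let X be a non-negative random variable on a probability space (Ω, F, μ) and a > 0 a real number such that μ{X > t} ≤ a/t for all t > a. Then for every t > a, E[X | X ≤ t] ≤ (a/(1 − a/t))·(1 − log(a/t)). -/
open MeasureTheory Set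
open scoped ENNReal

/-- If a non-negative random variable `X` satisfies the tail bound
`μ{X > t} ≤ a/t` for all `t > a` (where `a > 0`), then for every `t > a`
`E[X | X ≤ t] ≤ (a/(1 − a/t))·(1 − log(a/t))`.  The conditional expectation given the
event `{X ≤ t}` is expressed as the set average `⨍ ω in {X ≤ t}, X ω ∂μ`. -/
theorem conditional_expectation_of_tail_bound {Ω : Type*} [MeasurableSpace Ω]
    (μ : Measure Ω) [IsProbabilityMeasure μ]
    (X : Ω → ℝ) (hXm : Measurable X) (hXnn : ∀ ω, 0 ≤ X ω)
    (a : ℝ) (ha : 0 < a)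
    (htail : ∀ t : ℝ, a < t → μ {ω | t < X ω} ≤ ENNReal.ofReal (a / t)) :
    ∀ t : ℝ, a < t →
      ⨍ ω in {ω | X ω ≤ t}, X ω ∂μ ≤ (a / (1 - a / t)) * (1 - Real.log (a / t)) := by
  intro t ht
  have ht0 : (0:ℝ) < t := ha.trans ht
  set A : Set Ω := {ω | X ω ≤ t} with hA
  have hAm : MeasurableSet A := measurableSet_le hXm measurable_const
  have hat : a / t < 1 := (div_lt_one ht0).2 ht
  have hat0 : 0 < a / t := div_pos ha ht0
  -- lower bound on μ A
  have hcompl : μ Aᶜ ≤ ENNReal.ofReal (a / t) := by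
    have : Aᶜ = {ω | t < X ω} := by ext ω; simp [hA, not_le]
    rw [this]; exact htail t ht
  have hμA : ENNReal.ofReal (1 - a / t) ≤ μ A := by
    rw [ENNReal.ofReal_sub _ hat0.le, ENNReal.ofReal_one, tsub_le_iff_right]
    calc (1:ℝ≥0∞) = μ A + μ Aᶜ := by rw [measure_add_measure_compl hAm, measure_univ]
    _ ≤ μ A + ENNReal.ofReal (a/t) := add_le_add (le_refl _) hcompl
  have hμAr : 1 - a / t ≤ (μ A).toReal := by
    have h := ENNReal.toReal_mono (measure_ne_top μ A) hμA
    rwa [ENNReal.toReal_ofReal (by linarith)] at h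
  -- logarithm facts
  have hlogneg : Real.log (a / t) < 0 := Real.log_neg hat0 hat
  have hlogeq : Real.log (t / a) = - Real.log (a / t) := by
    rw [← Real.log_inv]; congr 1; rw [inv_div]
  have hlognn : 0 ≤ Real.log (t / a) := by rw [hlogeq]; linarith
  set ν : Measure Ω := μ.restrict A with hν
  have hXnn' : 0 ≤ᵐ[ν] X := ae_of_all _ hXnn
  -- layer cake
  have hlayer : ∫⁻ ω, ENNReal.ofReal (X ω) ∂ν
      = ∫⁻ s in Ioi (0:ℝ), ν {ω | s < X ω} :=
    lintegral_eq_lintegral_meas_lt ν hXnn' hXm.aemeasurable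
  have hsplit1 : (Ioc (0:ℝ) t) ∪ (Ioi t) = Ioi 0 := Ioc_union_Ioi_eq_Ioi ht0.le
  have hsplit2 : (Ioc (0:ℝ) a) ∪ (Ioc a t) = Ioc 0 t := Ioc_union_Ioc_eq_Ioc ha.le ht.le
  -- the part above t vanishes
  have hpart3 : ∫⁻ s in Ioi t, ν {ω | s < X ω} = 0 := by
    have hz : ∀ s ∈ Ioi t, ν {ω | s < X ω} = (fun _ => (0:ℝ≥0∞)) s := by
      intro s hs
      rw [hν, Measure.restrict_apply (measurableSet_lt measurable_const hXm)]
      have : {ω | s < X ω} ∩ A = ∅ := by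
        ext ω; simp only [mem_inter_iff, mem_setOf_eq, mem_empty_iff_false, iff_false, hA]
        rintro ⟨h1, h2⟩
        exact absurd (h2.trans_lt hs) (not_lt.2 h1.le)
      rw [this, measure_empty]
    rw [setLIntegral_congr_fun measurableSet_Ioi hz, lintegral_zero]
  -- the part below a is at most a
  have hpart1 : ∫⁻ s in Ioc (0:ℝ) a, ν {ω | s < X ω} ≤ ENNReal.ofReal a := by
    calc ∫⁻ s in Ioc (0:ℝ) a, ν {ω | s < X ω}
        ≤ ∫⁻ _ in Ioc (0:ℝ) a, (1:ℝ≥0∞) := by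
          refine lintegral_mono fun s => ?_
          exact le_trans (measure_mono (subset_univ _))
            (by rw [hν, Measure.restrict_apply_univ]; exact prob_le_one)
      _ = ENNReal.ofReal a := by
          rw [setLIntegral_const, one_mul, Real.volume_Ioc, sub_zero]
  -- the middle part
  have hint : IntegrableOn (fun s : ℝ => a / s) (Ioc a t) := by
    refine (ContinuousOn.integrableOn_Icc ?_).mono_set Ioc_subset_Icc_self
    exact continuousOn_const.div continuousOn_id
      (fun x hx => (ha.trans_le hx.1).ne')
  have hmid : ∫⁻ s in Ioc a t, ENNReal.ofReal (a / s)
      = ENNReal.ofReal (a * Real.log (t / a)) := by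
    rw [← ofReal_integral_eq_lintegral_ofReal hint
      (ae_restrict_of_forall_mem measurableSet_Ioc fun x hx =>
        (div_pos ha (ha.trans hx.1)).le)]
    congr 1
    rw [← intervalIntegral.integral_of_le ht.le]
    have h0 : (0:ℝ) ∉ uIcc a t := by
      rw [uIcc_of_le ht.le]; rintro ⟨h1, -⟩; exact absurd h1 (not_le.2 ha)
    simp_rw [div_eq_mul_inv]
    rw [intervalIntegral.integral_const_mul, integral_inv h0, div_eq_mul_inv]
  have hpart2 : ∫⁻ s in Ioc a t, ν {ω | s < X ω}
      ≤ ENNReal.ofReal (a * Real.log (t / a)) := by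
    rw [← hmid]
    refine setLIntegral_mono ((measurable_const.div measurable_id).ennreal_ofReal)
      fun s hs => ?_
    refine le_trans ?_ (htail s hs.1)
    rw [hν]; exact Measure.restrict_apply_le _ _
  -- combine
  have hbound : ∫⁻ ω, ENNReal.ofReal (X ω) ∂ν
      ≤ ENNReal.ofReal (a * (1 - Real.log (a / t))) := by
    rw [hlayer, ← hsplit1, lintegral_union measurableSet_Ioi (Ioc_disjoint_Ioi le_rfl),
      hpart3, add_zero, ← hsplit2,
      lintegral_union measurableSet_Ioc (Ioc_disjoint_Ioc_of_le le_rfl)]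
    calc _ ≤ ENNReal.ofReal a + ENNReal.ofReal (a * Real.log (t / a)) :=
          add_le_add hpart1 hpart2
      _ = ENNReal.ofReal (a * (1 - Real.log (a / t))) := by
          rw [← ENNReal.ofReal_add ha.le (by positivity)]
          congr 1
          rw [hlogeq]; ring
  -- from lintegral to integral
  have hIeq : ∫ ω in A, X ω ∂μ = (∫⁻ ω, ENNReal.ofReal (X ω) ∂ν).toReal :=
    integral_eq_lintegral_of_nonneg_ae hXnn' hXm.aestronglyMeasurable
  have hInn : 0 ≤ ∫ ω in A, X ω ∂μ := setIntegral_nonneg hAm fun ω _ => hXnn ω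
  have hIle : ∫ ω in A, X ω ∂μ ≤ a * (1 - Real.log (a / t)) := by
    rw [hIeq]
    exact ENNReal.toReal_le_of_le_ofReal (by nlinarith) hbound
  -- finish
  rw [setAverage_eq, smul_eq_mul]
  have hinv : (μ A).toReal⁻¹ ≤ (1 - a / t)⁻¹ :=
    inv_anti₀ (by linarith) hμAr
  calc (μ A).toReal⁻¹ * ∫ ω in A, X ω ∂μ
      ≤ (1 - a / t)⁻¹ * ∫ ω in A, X ω ∂μ := mul_le_mul_of_nonneg_right hinv hInn
    _ ≤ (1 - a / t)⁻¹ * (a * (1 - Real.log (a / t))) :=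
        mul_le_mul_of_nonneg_left hIle (inv_nonneg.2 (by linarith))
    _ = a / (1 - a / t) * (1 - Real.log (a / t)) := by ring
end

section
/- Let A be a Hermitian n×n complex matrix with eigenvalues λ₁, …, λₙ ordered by absolute value, |λ₁| ≥ … ≥ |λₙ|, with corresponding orthonormal eigenvectors u₁, …, uₙ, and assume |λ₁| > |λ₂| > 0. Let α ∈ (0, π/2) and let x ∈ ℂⁿ be a nonzero vector with ⟨x, u₁⟩ ≠ 0 and ⟨x, u₂⟩ ≠ 0. Then ρ_α(A, x) ≥ (log cot(α) + log‖Π₂(x)‖ − log‖Π₁(x)‖) / (log|λ₁| − log|λ₂|). -/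
open Matrix
open scoped ComplexInnerProductSpace

/-- The Fubini–Study distance `d_R(y,z) = arccos(|⟨y,z⟩|/(‖y‖‖z‖))`. -/
noncomputable def dFS {n : ℕ} (y z : EuclideanSpace ℂ (Fin n)) : ℝ :=
  Real.arccos (‖⟪y, z⟫‖ / (‖y‖ * ‖z‖))

/-- `ρ_α(A, x)`: the minimal number `k` of power iteration steps starting from `x`
after which the iterate `p_k` (a positive multiple of `Aᵏx`) lies in the
`α`-neighbourhood of `u` in Fubini–Study distance; `∞` if this never happens. -/
noncomputable def powIterSteps {n : ℕ} (α : ℝ) (A : Matrix (Fin n) (Fin n) ℂ)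
    (x u : EuclideanSpace ℂ (Fin n)) : ℕ∞ :=
  sInf ((fun k : ℕ => (k : ℕ∞)) '' {k : ℕ | dFS ((Matrix.toEuclideanLin A ^ k) x) u ≤ α})

set_option maxHeartbeats 1600000 in
/-- lower bound for power iteration, Kostlan.  For a Hermitian `A`
with eigenvalues `λ₁, …, λₙ` ordered by absolute value, orthonormal eigenvectors
`u₁, …, uₙ`, `|λ₁| > |λ₂| > 0`, `α ∈ (0, π/2)` and `x ≠ 0` with `⟨x,u₁⟩ ≠ 0` and
`⟨x,u₂⟩ ≠ 0`, we have
`ρ_α(A,x) ≥ (log cot α + log‖Π₂x‖ − log‖Π₁x‖)/(log|λ₁| − log|λ₂|)`. -/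
theorem powerIteration_lower_bound
    {n : ℕ} (hn : 2 ≤ n) (A : Matrix (Fin n) (Fin n) ℂ) (hA : A.IsHermitian)
    (lam : Fin n → ℝ) (u : Fin n → EuclideanSpace ℂ (Fin n))
    (hu : Orthonormal ℂ u)
    (heig : ∀ i, Matrix.toEuclideanLin A (u i) = (lam i : ℂ) • u i)
    (hord : ∀ i j : Fin n, i ≤ j → |lam j| ≤ |lam i|)
    (hgap : |lam ⟨1, by omega⟩| < |lam ⟨0, by omega⟩|)
    (hpos : 0 < |lam ⟨1, by omega⟩|)
    (α : ℝ) (hα : α ∈ Set.Ioo 0 (Real.pi / 2))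
    (x : EuclideanSpace ℂ (Fin n)) (hx : x ≠ 0)
    (hx1 : ⟪u ⟨0, by omega⟩, x⟫ ≠ 0) (hx2 : ⟪u ⟨1, by omega⟩, x⟫ ≠ 0) :
    ∀ k : ℕ, powIterSteps α A x (u ⟨0, by omega⟩) = (k : ℕ∞) →
      (Real.log (Real.cot α)
          + Real.log ‖(⟪u ⟨1, by omega⟩, x⟫ : ℂ) • u ⟨1, by omega⟩‖
          - Real.log ‖(⟪u ⟨0, by omega⟩, x⟫ : ℂ) • u ⟨0, by omega⟩‖) /
        (Real.log |lam ⟨0, by omega⟩| - Real.log |lam ⟨1, by omega⟩|) ≤ (k : ℝ) := by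
  intro k hk
  obtain ⟨hα0, hα2⟩ := hα
  have hπ := Real.pi_pos
  set i0 : Fin n := ⟨0, by omega⟩ with hi0
  set i1 : Fin n := ⟨1, by omega⟩ with hi1
  have hx1' : ⟪u i0, x⟫ ≠ 0 := hx1
  have hx2' : ⟪u i1, x⟫ ≠ 0 := hx2
  have hgap' : |lam i1| < |lam i0| := hgap
  have hpos' : 0 < |lam i1| := hpos
  have hpos0 : 0 < |lam i0| := lt_trans hpos' hgap'
  set L := Matrix.toEuclideanLin A with hL
  -- extract membership at k
  have hmem : dFS ((L ^ k) x) (u i0) ≤ α := by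
    unfold powIterSteps at hk
    set S := {k : ℕ | dFS ((L ^ k) x) (u i0) ≤ α} with hS
    have hne : S.Nonempty := by
      by_contra h
      rw [Set.not_nonempty_iff_eq_empty] at h
      rw [h, Set.image_empty, sInf_empty] at hk
      exact (ENat.coe_ne_top k) hk.symm
    have hm := Nat.sInf_mem hne
    have h1 : (k : ℕ∞) ≤ ((sInf S : ℕ) : ℕ∞) := by
      rw [← hk]; exact sInf_le ⟨_, hm, rfl⟩
    have h2 : ((sInf S : ℕ) : ℕ∞) ≤ (k : ℕ∞) := by
      rw [← hk]
      apply le_sInf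
      rintro b ⟨j, hj, rfl⟩
      show ((sInf S : ℕ) : ℕ∞) ≤ (j : ℕ∞)
      exact_mod_cast Nat.sInf_le hj
    have : k = sInf S := by exact_mod_cast le_antisymm h1 h2
    rw [this]; exact hm
  -- eigen computation
  have hsym := Matrix.isHermitian_iff_isSymmetric.mp hA
  have hinner : ∀ (i : Fin n) (m : ℕ), ⟪u i, (L ^ m) x⟫ = (lam i : ℂ)^m * ⟪u i, x⟫ := by
    intro i m
    induction m with
    | zero => simp
    | succ m ih =>
      rw [pow_succ', Module.End.mul_apply, ← hsym, heig, inner_smul_left, ih,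
        Complex.conj_ofReal]
      ring
  set y := (L ^ k) x with hy
  have hnorm1 : ‖⟪u i0, y⟫‖ = |lam i0|^k * ‖⟪u i0, x⟫‖ := by
    rw [hinner i0 k, norm_mul, norm_pow, Complex.norm_real, Real.norm_eq_abs]
  have hnorm2 : ‖⟪u i1, y⟫‖ = |lam i1|^k * ‖⟪u i1, x⟫‖ := by
    rw [hinner i1 k, norm_mul, norm_pow, Complex.norm_real, Real.norm_eq_abs]
  set a := |lam i0|^k * ‖⟪u i0, x⟫‖ with ha
  set b := |lam i1|^k * ‖⟪u i1, x⟫‖ with hbdef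
  have hapos : 0 < a := by
    apply mul_pos (pow_pos hpos0 k)
    simpa [norm_pos_iff] using hx1'
  have hbpos : 0 < b := by
    apply mul_pos (pow_pos hpos' k)
    simpa [norm_pos_iff] using hx2'
  have hyne : y ≠ 0 := by
    intro h
    have h0 : ‖(⟪u i0, y⟫ : ℂ)‖ = 0 := by rw [h, inner_zero_right, norm_zero]
    rw [hnorm1] at h0
    exact hapos.ne' h0
  have hynorm : 0 < ‖y‖ := norm_pos_iff.mpr hyne
  -- Bessel
  have hne01 : i0 ≠ i1 := by simp [hi0, hi1, Fin.ext_iff]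
  have hbessel : a^2 + b^2 ≤ ‖y‖^2 := by
    have := hu.sum_inner_products_le (s := {i0, i1}) y
    rwa [Finset.sum_pair hne01, hnorm1, hnorm2] at this
  -- from the distance bound to cos α ≤ a / ‖y‖
  have hui0 : ‖u i0‖ = 1 := hu.1 i0
  have hcs : ‖⟪u i0, y⟫‖ ≤ ‖y‖ := by
    have := norm_inner_le_norm (𝕜 := ℂ) (u i0) y
    rwa [hui0, one_mul] at this
  have ht : Real.cos α ≤ a / ‖y‖ := by
    have harc : Real.arccos (‖⟪u i0, y⟫‖ / ‖y‖) ≤ α := by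
      have : dFS y (u i0) = Real.arccos (‖⟪u i0, y⟫‖ / ‖y‖) := by
        rw [dFS, hui0, mul_one, ← norm_inner_symm]
      rw [← this]; exact hmem
    have ht1 : ‖⟪u i0, y⟫‖ / ‖y‖ ≤ 1 := by
      rw [div_le_one hynorm]; exact hcs
    have ht0 : 0 ≤ ‖⟪u i0, y⟫‖ / ‖y‖ := by positivity
    have hc : Real.cos α ≤ ‖⟪u i0, y⟫‖ / ‖y‖ :=
      calc Real.cos α ≤ Real.cos (Real.arccos (‖⟪u i0, y⟫‖ / ‖y‖)) := by
            apply Real.cos_le_cos_of_nonneg_of_le_pi (Real.arccos_nonneg _)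
              (by linarith) harc
        _ = ‖⟪u i0, y⟫‖ / ‖y‖ := Real.cos_arccos (by linarith) ht1
    rwa [hnorm1] at hc
  have hcospos : 0 < Real.cos α := Real.cos_pos_of_mem_Ioo ⟨by linarith, hα2⟩
  have hsinpos : 0 < Real.sin α := Real.sin_pos_of_pos_of_lt_pi hα0 (by linarith)
  have hca : Real.cos α * ‖y‖ ≤ a := by
    rw [le_div_iff₀ hynorm] at ht; exact ht
  -- key inequality
  have hsq : (b * Real.cos α)^2 ≤ (a * Real.sin α)^2 := by
    have h1 : (Real.cos α)^2 * (a^2 + b^2) ≤ a^2 := by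
      nlinarith [mul_le_mul_of_nonneg_left hbessel (sq_nonneg (Real.cos α)),
        mul_le_mul hca hca (by positivity : (0:ℝ) ≤ Real.cos α * ‖y‖) hapos.le]
    nlinarith [Real.sin_sq_add_cos_sq α]
  have hkey : b * Real.cos α ≤ a * Real.sin α := by
    have h := Real.sqrt_le_sqrt hsq
    rwa [Real.sqrt_sq (mul_nonneg hbpos.le hcospos.le),
      Real.sqrt_sq (mul_nonneg hapos.le hsinpos.le)] at h
  have hcot : Real.cot α * b ≤ a := by
    rw [Real.cot_eq_cos_div_sin, div_mul_eq_mul_div, div_le_iff₀ hsinpos,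
      mul_comm (Real.cos α) b]
    exact hkey
  have hcotpos : 0 < Real.cot α := by
    rw [Real.cot_eq_cos_div_sin]; positivity
  -- take logs
  have hlog : Real.log (Real.cot α * b) ≤ Real.log a := Real.log_le_log (mul_pos hcotpos hbpos) hcot
  rw [Real.log_mul (ne_of_gt hcotpos) (ne_of_gt hbpos), hbdef, ha,
    Real.log_mul (pow_ne_zero k hpos'.ne') (norm_ne_zero_iff.mpr hx2'),
    Real.log_mul (pow_ne_zero k hpos0.ne') (norm_ne_zero_iff.mpr hx1'),
    Real.log_pow, Real.log_pow] at hlog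
  clear_value y a b
  have hD : 0 < Real.log |lam i0| - Real.log |lam i1| := by
    have := Real.log_lt_log hpos' hgap'
    linarith
  have hn2 : ‖(⟪u i1, x⟫ : ℂ) • u i1‖ = ‖⟪u i1, x⟫‖ := by
    rw [norm_smul, hu.1 i1, mul_one]
  have hn1 : ‖(⟪u i0, x⟫ : ℂ) • u i0‖ = ‖⟪u i0, x⟫‖ := by
    rw [norm_smul, hu.1 i0, mul_one]
  rw [hn1, hn2, div_le_iff₀ hD]
  nlinarith [hlog]
end
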